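/- The action of SL(2, ℤ) on the torus 𝕋² = ℝ²/ℤ² induced by matrix multiplication on ℝ² is thick strong mixing: there exists a thick set N ⊆ SL(2, ℤ) such that for every pair of nonempty open sets U, V ⊆ 𝕋² there is a finite set F ⊆ N with γU ∩ V ≠ ∅ for all γ ∈ N \ F. -/

import Mathlib

open Pointwise

/-- A subset `N` of a group `G` is thick if for every finite subset `F ⊆ G`,
`N ∩ ⋂_{γ ∈ F} γN ≠ ∅`. -/
def IsThick {G : Type*} [Group G] (N : Set G) : Prop :=
  ∀ F : Finset G, (N ∩ ⋂ γ ∈ F, γ • N).Nonempty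

/-- The torus `𝕋² = ℝ²/ℤ²`, realized as the quotient of `Fin 2 → ℝ` by the integer
lattice (the subgroup of vectors with all coordinates in `ℤ·1`), with the quotient
topology. -/
abbrev Torus2 : Type :=
  (Fin 2 → ℝ) ⧸ (AddSubgroup.pi (Set.univ : Set (Fin 2)) fun _ => AddSubgroup.zmultiples (1 : ℝ))

/-- The quotient map `ℝ² → 𝕋²`. -/
def torusMk : (Fin 2 → ℝ) → Torus2 := QuotientAddGroup.mk

/-- The linear action of `γ ∈ SL(2, ℤ)` on `ℝ²` by matrix multiplication. -/
def sl2Vec (γ : Matrix.SpecialLinearGroup (Fin 2) ℤ) (v : Fin 2 → ℝ) : Fin 2 → ℝ :=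
  ((γ : Matrix (Fin 2) (Fin 2) ℤ).map (Int.cast : ℤ → ℝ)).mulVec v

/-- `slHits γ U V` says that `γU ∩ V ≠ ∅` for the induced action of `γ ∈ SL(2, ℤ)` on the
torus: since the quotient map is surjective, this holds iff some `v ∈ ℝ²` has `[v] ∈ U`
and `[γv] ∈ V`. -/
def slHits (γ : Matrix.SpecialLinearGroup (Fin 2) ℤ) (U V : Set Torus2) : Prop :=
  ∃ v : Fin 2 → ℝ, torusMk v ∈ U ∧ torusMk (sl2Vec γ v) ∈ V

/-! ### Auxiliary material for the proof -/

open goldenRatio Real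

noncomputable section ThickAux

abbrev SL2Z := Matrix.SpecialLinearGroup (Fin 2) ℤ

/-- The subgroup `ℤ + ℤφ` of `ℝ`. -/
def Hphi : AddSubgroup ℝ where
  carrier := {y | ∃ a b : ℤ, y = a + b * φ}
  zero_mem' := ⟨0, 0, by norm_num⟩
  add_mem' := by
    rintro x y ⟨a, b, rfl⟩ ⟨c, d, rfl⟩
    exact ⟨a + c, b + d, by push_cast; ring⟩
  neg_mem' := by
    rintro x ⟨a, b, rfl⟩
    exact ⟨-a, -b, by push_cast; ring⟩

lemma Hphi_dense : Dense (Hphi : Set ℝ) := by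
  rcases AddSubgroup.dense_or_cyclic Hphi with h | ⟨a, ha⟩
  · exact h
  · exfalso
    have h1 : (1 : ℝ) ∈ Hphi := ⟨1, 0, by norm_num⟩
    have hφ : (φ : ℝ) ∈ Hphi := ⟨0, 1, by norm_num⟩
    rw [ha, AddSubgroup.mem_closure_singleton] at h1 hφ
    obtain ⟨n, hn⟩ := h1
    obtain ⟨m, hm⟩ := hφ
    have hn0 : (n : ℝ) ≠ 0 := by
      intro h
      rw [zsmul_eq_mul, h, zero_mul] at hn
      norm_num at hn
    rw [zsmul_eq_mul] at hn hm
    have key : φ * n = m := by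
      calc φ * n = (↑m * a) * n := by rw [hm]
        _ = ↑m * (↑n * a) := by ring
        _ = ↑m := by rw [hn]; ring
    have : φ = ((m : ℚ) / (n : ℚ) : ℚ) := by
      push_cast
      rw [eq_div_iff hn0]
      exact key
    exact goldenRatio_irrational ⟨_, this.symm⟩

/-- Uniform density of `ℤ + ℤφ`: approximation with uniformly bounded `φ`-coefficient. -/
lemma dense_unif {δ : ℝ} (hδ : 0 < δ) :
    ∃ M : ℕ, ∀ x : ℝ, ∃ a b : ℤ, |(b : ℝ)| ≤ M ∧ |x - (a + b * φ)| < δ := by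
  have key : ∀ y : ℝ, ∃ a b : ℤ, |y - (a + b * φ)| < δ / 2 := by
    intro y
    have := Hphi_dense y
    rw [Metric.mem_closure_iff] at this
    obtain ⟨z, hz, hdist⟩ := this (δ / 2) (by positivity)
    obtain ⟨a, b, rfl⟩ := hz
    exact ⟨a, b, by simpa [Real.dist_eq] using hdist⟩
  choose af bf hf using key
  have hcov : Set.Icc (0:ℝ) 1 ⊆ ⋃ y : ℝ, Metric.ball ((af y : ℝ) + bf y * φ) (δ / 2) := by
    intro x _
    exact Set.mem_iUnion.2 ⟨x, by simpa [Real.dist_eq] using hf x⟩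
  obtain ⟨t, ht⟩ := isCompact_Icc.elim_finite_subcover
    (fun y : ℝ => Metric.ball ((af y : ℝ) + bf y * φ) (δ / 2)) (fun _ => Metric.isOpen_ball) hcov
  refine ⟨t.sup fun y => (bf y).natAbs, fun x => ?_⟩
  have hx' : Int.fract x ∈ Set.Icc (0:ℝ) 1 :=
    ⟨Int.fract_nonneg x, (Int.fract_lt_one x).le⟩
  obtain ⟨y, hyt, hy⟩ := Set.mem_iUnion₂.1 (ht hx')
  refine ⟨af y + ⌊x⌋, bf y, ?_, ?_⟩
  · have : (bf y).natAbs ≤ t.sup fun y => (bf y).natAbs :=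
      Finset.le_sup (f := fun y => (bf y).natAbs) hyt
    calc |(bf y : ℝ)| = ((bf y).natAbs : ℝ) := by
          simp [Nat.cast_natAbs]
      _ ≤ _ := by exact_mod_cast this
  · have : |Int.fract x - ((af y : ℝ) + bf y * φ)| < δ / 2 := by
      simpa [Real.dist_eq] using hy
    rw [Int.fract] at this
    push_cast
    calc |x - ((af y : ℝ) + ⌊x⌋ + bf y * φ)| = |x - ⌊x⌋ - ((af y : ℝ) + bf y * φ)| := by
          ring_nf
      _ < δ / 2 := this
      _ < δ := by linarith

/-- Unstable eigendirection of `[[2,1],[1,1]]`. -/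
def wvec : Fin 2 → ℝ := ![φ, 1]

/-- `Works S δ`: any target is within `δ` (mod `ℤ²`) of any line in direction `wvec`,
witnessed by a parameter of size at most `S`. -/
def Works (S δ : ℝ) : Prop :=
  ∀ q targ : Fin 2 → ℝ, ∃ (s : ℝ) (k : Fin 2 → ℤ),
    |s| ≤ S ∧ ∀ i, |q i + s * wvec i - (targ i + k i)| < δ

lemma works_mono {S δ δ' : ℝ} (h : Works S δ) (hδ : δ ≤ δ') : Works S δ' := by
  intro q targ
  obtain ⟨s, k, hs, hk⟩ := h q targ
  exact ⟨s, k, hs, fun i => lt_of_lt_of_le (hk i) hδ⟩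

lemma seg {δ : ℝ} (hδ : 0 < δ) : ∃ S : ℝ, 0 ≤ S ∧ Works S δ := by
  obtain ⟨M, hM⟩ := dense_unif hδ
  refine ⟨M + 1, by positivity, fun q targ => ?_⟩
  set r : ℝ := Int.fract (targ 1 - q 1) with hr
  obtain ⟨a, b, hb, hab⟩ := hM (targ 0 - q 0 - r * φ)
  refine ⟨r + b, ![-a, b - ⌊targ 1 - q 1⌋], ?_, ?_⟩
  · have h0 : 0 ≤ r := Int.fract_nonneg _
    have h1 : r < 1 := Int.fract_lt_one _
    calc |r + (b:ℝ)| ≤ |r| + |(b:ℝ)| := abs_add_le _ _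
      _ ≤ 1 + M := by
          have : |r| ≤ 1 := by rw [abs_of_nonneg h0]; linarith
          linarith [hb]
      _ = M + 1 := by ring
  · intro i
    fin_cases i
    · show |q 0 + (r + b) * wvec 0 - (targ 0 + ((-a : ℤ) : ℝ))| < δ
      have : q 0 + (r + b) * wvec 0 - (targ 0 + ((-a : ℤ) : ℝ))
          = -((targ 0 - q 0 - r * φ) - (a + b * φ)) := by
        show q 0 + (r + b) * φ - (targ 0 + ((-a : ℤ) : ℝ)) = _
        push_cast
        ring
      rw [this, abs_neg]
      exact hab
    · show |q 1 + (r + b) * wvec 1 - (targ 1 + ((b - ⌊targ 1 - q 1⌋ : ℤ) : ℝ))| < δ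
      have : q 1 + (r + b) * wvec 1 - (targ 1 + ((b - ⌊targ 1 - q 1⌋ : ℤ) : ℝ)) = 0 := by
        show q 1 + (r + b) * 1 - _ = 0
        rw [hr, Int.fract]
        push_cast
        ring
      rw [this, abs_zero]
      exact hδ

/-- The hyperbolic matrix `[[2,1],[1,1]]` in `SL(2,ℤ)`. -/
def Amat : SL2Z := ⟨!![2, 1; 1, 1], by simp [Matrix.det_fin_two_of]⟩

/-- The expanding eigenvalue `φ + 1 = φ²`. -/
def lam : ℝ := φ + 1

lemma one_lt_lam : 1 < lam := by
  have := goldenRatio_pos; unfold lam; linarith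

lemma lam_pos : 0 < lam := lt_trans one_pos one_lt_lam

lemma sl2Vec_eq (g : SL2Z) (v : Fin 2 → ℝ) :
    sl2Vec g v = ((Int.castRingHom ℝ).mapMatrix (g : Matrix (Fin 2) (Fin 2) ℤ)).mulVec v := rfl

lemma sl2Vec_mul (g h : SL2Z) (v : Fin 2 → ℝ) :
    sl2Vec (g * h) v = sl2Vec g (sl2Vec h v) := by
  rw [sl2Vec_eq, sl2Vec_eq, sl2Vec_eq, Matrix.mulVec_mulVec,
    Matrix.SpecialLinearGroup.coe_mul, map_mul]

lemma sl2Vec_one (v : Fin 2 → ℝ) : sl2Vec 1 v = v := by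
  rw [sl2Vec_eq, Matrix.SpecialLinearGroup.coe_one, map_one, Matrix.one_mulVec]

lemma sl2Vec_inv_cancel (g : SL2Z) (v : Fin 2 → ℝ) : sl2Vec g (sl2Vec g⁻¹ v) = v := by
  rw [← sl2Vec_mul, mul_inv_cancel, sl2Vec_one]

lemma sl2Vec_add (g : SL2Z) (v w : Fin 2 → ℝ) :
    sl2Vec g (v + w) = sl2Vec g v + sl2Vec g w := Matrix.mulVec_add _ _ _

lemma sl2Vec_smul (g : SL2Z) (c : ℝ) (v : Fin 2 → ℝ) :
    sl2Vec g (c • v) = c • sl2Vec g v := Matrix.mulVec_smul _ _ _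

lemma sl2Vec_Amat_wvec : sl2Vec Amat wvec = lam • wvec := by
  have hsq : φ * φ = φ + 1 := by rw [← goldenRatio_sq]; ring
  funext i
  fin_cases i <;>
    simp [sl2Vec, Amat, wvec, lam, Matrix.mulVec, dotProduct, Fin.sum_univ_two] <;>
    nlinarith [hsq]

lemma sl2Vec_Amat_pow_wvec (n : ℕ) : sl2Vec (Amat ^ n) wvec = lam ^ n • wvec := by
  induction n with
  | zero => simp [pow_zero, sl2Vec_one]
  | succ n ih =>
    rw [pow_succ', sl2Vec_mul, ih, sl2Vec_smul, sl2Vec_Amat_wvec, pow_succ', mul_smul]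
    rw [smul_comm]

lemma sl2Vec_intCast (g : SL2Z) (k : Fin 2 → ℤ) :
    sl2Vec g (fun i => (k i : ℝ))
      = fun i => (((g : Matrix (Fin 2) (Fin 2) ℤ).mulVec k) i : ℝ) := by
  funext i
  simp only [sl2Vec, Matrix.mulVec, dotProduct, Fin.sum_univ_two, Matrix.map_apply]
  push_cast
  ring

/-- Size of a matrix: one plus the sum of the absolute values of its entries. -/
def mass (g : SL2Z) : ℕ :=
  (∑ i : Fin 2, ∑ j : Fin 2, ((g : Matrix (Fin 2) (Fin 2) ℤ) i j).natAbs) + 1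

lemma one_le_mass (g : SL2Z) : 1 ≤ mass g := Nat.le_add_left 1 _

lemma abs_entry_le_mass (g : SL2Z) (i j : Fin 2) :
    |((g : Matrix (Fin 2) (Fin 2) ℤ) i j)| ≤ (mass g : ℤ) := by
  rw [Int.abs_eq_natAbs]
  have h1 : ((g : Matrix (Fin 2) (Fin 2) ℤ) i j).natAbs
      ≤ ∑ i : Fin 2, ∑ j : Fin 2, ((g : Matrix (Fin 2) (Fin 2) ℤ) i j).natAbs := by
    calc ((g : Matrix (Fin 2) (Fin 2) ℤ) i j).natAbs
        ≤ ∑ j : Fin 2, ((g : Matrix (Fin 2) (Fin 2) ℤ) i j).natAbs :=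
          Finset.single_le_sum (f := fun j => ((g : Matrix (Fin 2) (Fin 2) ℤ) i j).natAbs)
            (fun _ _ => Nat.zero_le _) (Finset.mem_univ j)
      _ ≤ _ := Finset.single_le_sum
            (f := fun i => ∑ j : Fin 2, ((g : Matrix (Fin 2) (Fin 2) ℤ) i j).natAbs)
            (fun _ _ => Nat.zero_le _) (Finset.mem_univ i)
  have : ((g : Matrix (Fin 2) (Fin 2) ℤ) i j).natAbs ≤ mass g := h1.trans (Nat.le_succ _)
  exact_mod_cast this

lemma abs_row_le_mass (g : SL2Z) (i : Fin 2) :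
    |((g : Matrix (Fin 2) (Fin 2) ℤ) i 0 : ℝ)| + |((g : Matrix (Fin 2) (Fin 2) ℤ) i 1 : ℝ)|
      ≤ (mass g : ℝ) := by
  have h1 : (∑ j : Fin 2, ((g : Matrix (Fin 2) (Fin 2) ℤ) i j).natAbs)
      ≤ ∑ i : Fin 2, ∑ j : Fin 2, ((g : Matrix (Fin 2) (Fin 2) ℤ) i j).natAbs :=
    Finset.single_le_sum
      (f := fun i => ∑ j : Fin 2, ((g : Matrix (Fin 2) (Fin 2) ℤ) i j).natAbs)
      (fun _ _ => Nat.zero_le _) (Finset.mem_univ i)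
  have h2 : (∑ j : Fin 2, ((g : Matrix (Fin 2) (Fin 2) ℤ) i j).natAbs) ≤ mass g :=
    h1.trans (Nat.le_succ _)
  rw [Fin.sum_univ_two] at h2
  have h3 : ((((g : Matrix (Fin 2) (Fin 2) ℤ) i 0).natAbs
      + ((g : Matrix (Fin 2) (Fin 2) ℤ) i 1).natAbs : ℕ) : ℝ) ≤ (mass g : ℝ) := by
    exact_mod_cast h2
  calc |((g : Matrix (Fin 2) (Fin 2) ℤ) i 0 : ℝ)| + |((g : Matrix (Fin 2) (Fin 2) ℤ) i 1 : ℝ)|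
      = ((((g : Matrix (Fin 2) (Fin 2) ℤ) i 0).natAbs
        + ((g : Matrix (Fin 2) (Fin 2) ℤ) i 1).natAbs : ℕ) : ℝ) := by
        push_cast [Nat.cast_natAbs]
        ring
    _ ≤ _ := h3

lemma sl2Vec_norm_le (g : SL2Z) (x : Fin 2 → ℝ) :
    ‖sl2Vec g x‖ ≤ (mass g : ℝ) * ‖x‖ := by
  have hm : (0:ℝ) ≤ (mass g : ℝ) * ‖x‖ := by positivity
  rw [pi_norm_le_iff_of_nonneg hm]
  intro i
  have hx : ∀ j, |x j| ≤ ‖x‖ := fun j => norm_le_pi_norm x j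
  have habs := abs_row_le_mass g i
  show |sl2Vec g x i| ≤ _
  have : sl2Vec g x i
      = ((g : Matrix (Fin 2) (Fin 2) ℤ) i 0 : ℝ) * x 0
        + ((g : Matrix (Fin 2) (Fin 2) ℤ) i 1 : ℝ) * x 1 := by
    simp [sl2Vec, Matrix.mulVec, dotProduct, Fin.sum_univ_two]
  rw [this]
  calc |((g : Matrix (Fin 2) (Fin 2) ℤ) i 0 : ℝ) * x 0
        + ((g : Matrix (Fin 2) (Fin 2) ℤ) i 1 : ℝ) * x 1|
      ≤ |((g : Matrix (Fin 2) (Fin 2) ℤ) i 0 : ℝ)| * |x 0|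
        + |((g : Matrix (Fin 2) (Fin 2) ℤ) i 1 : ℝ)| * |x 1| := by
        calc _ ≤ |((g : Matrix (Fin 2) (Fin 2) ℤ) i 0 : ℝ) * x 0|
              + |((g : Matrix (Fin 2) (Fin 2) ℤ) i 1 : ℝ) * x 1| := abs_add_le _ _
          _ = _ := by rw [abs_mul, abs_mul]
    _ ≤ (mass g : ℝ) * ‖x‖ := by
        have hn : (0:ℝ) ≤ ‖x‖ := norm_nonneg _
        nlinarith [abs_nonneg (x 0), abs_nonneg (x 1), hx 0, hx 1, habs,
          abs_nonneg (((g : Matrix (Fin 2) (Fin 2) ℤ) i 0 : ℝ)),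
          abs_nonneg (((g : Matrix (Fin 2) (Fin 2) ℤ) i 1 : ℝ))]

lemma mass_le_finite (B : ℕ) : {g : SL2Z | mass g ≤ B}.Finite := by
  rw [← Set.finite_coe_iff]
  have key : ∀ g : SL2Z, mass g ≤ B → ∀ i j : Fin 2,
      (g : Matrix (Fin 2) (Fin 2) ℤ) i j ∈ Set.Icc (-(B:ℤ)) (B:ℤ) := by
    intro g hg i j
    have h1 := abs_entry_le_mass g i j
    have h2 : (mass g : ℤ) ≤ (B : ℤ) := by exact_mod_cast hg
    rw [abs_le] at h1
    exact ⟨by omega, by omega⟩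
  have this : ∀ g : {g : SL2Z | mass g ≤ B}, ∀ i j : Fin 2,
      ((g : SL2Z) : Matrix (Fin 2) (Fin 2) ℤ) i j ∈ Set.Icc (-(B:ℤ)) (B:ℤ) :=
    fun g i j => key g g.2 i j
  let f : {g : SL2Z | mass g ≤ B} → (Fin 2 → Fin 2 → Set.Icc (-(B:ℤ)) (B:ℤ)) :=
    fun g i j => ⟨((g : SL2Z) : Matrix (Fin 2) (Fin 2) ℤ) i j, this g i j⟩
  have hinj : Function.Injective f := by
    intro g h hgh
    ext i j
    have := congrFun (congrFun hgh i) j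
    simpa [f] using congrArg Subtype.val this
  exact Finite.of_injective f hinj

lemma continuous_torusMk : Continuous torusMk := continuous_quot_mk

lemma torusMk_surjective : Function.Surjective torusMk := Quot.exists_rep

lemma torusMk_sub_int (x : Fin 2 → ℝ) (k : Fin 2 → ℤ) :
    torusMk (x - fun i => (k i : ℝ)) = torusMk x := by
  unfold torusMk
  rw [QuotientAddGroup.eq]
  refine (AddSubgroup.mem_pi _).2 fun i _ => ?_
  refine ⟨k i, ?_⟩
  show (k i) • (1:ℝ) = (-(x - fun i => (k i : ℝ)) + x) i
  simp [zsmul_eq_mul]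

/-- A choice of segment-length bound for accuracy `1/(j+1)`. -/
def Sfun (j : ℕ) : ℝ :=
  Classical.choose (seg (show (0:ℝ) < 1 / (j + 1) by positivity))

lemma Sfun_nonneg (j : ℕ) : 0 ≤ Sfun j :=
  (Classical.choose_spec (seg (show (0:ℝ) < 1 / (j + 1) by positivity))).1

lemma Sfun_works (j : ℕ) : Works (Sfun j) (1 / (j + 1)) :=
  (Classical.choose_spec (seg (show (0:ℝ) < 1 / (j + 1) by positivity))).2

/-- Monotone envelope of `Sfun`. -/
def maxS (m : ℕ) : ℝ := (Finset.range (m + 1)).sup' ⟨0, Finset.mem_range.2 (Nat.succ_pos m)⟩ Sfun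

lemma Sfun_le_maxS {j m : ℕ} (h : j ≤ m) : Sfun j ≤ maxS m :=
  Finset.le_sup' Sfun (Finset.mem_range.2 (Nat.lt_succ_of_le h))

lemma maxS_nonneg (m : ℕ) : 0 ≤ maxS m :=
  le_trans (Sfun_nonneg 0) (Sfun_le_maxS (Nat.zero_le m))

/-- The accuracy index used for `g` at scale `δ`. -/
def kf (g : SL2Z) (δ : ℝ) : ℕ := ⌈(mass g : ℝ) / δ⌉₊

/-- The threshold power for `g` in the thick set. -/
def nfun (g : SL2Z) : ℕ :=
  Classical.choose
    (pow_unbounded_of_one_lt (R := ℝ) ((mass g : ℝ) ^ 2 * maxS ((mass g) ^ 2)) one_lt_lam)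

lemma nfun_spec (g : SL2Z) :
    (mass g : ℝ) ^ 2 * maxS ((mass g) ^ 2) < lam ^ nfun g :=
  Classical.choose_spec
    (pow_unbounded_of_one_lt (R := ℝ) ((mass g : ℝ) ^ 2 * maxS ((mass g) ^ 2)) one_lt_lam)

lemma norm_wvec_le : ‖wvec‖ ≤ φ := by
  rw [pi_norm_le_iff_of_nonneg goldenRatio_pos.le]
  intro i
  fin_cases i
  · show |wvec 0| ≤ φ
    show |φ| ≤ φ
    rw [abs_of_nonneg goldenRatio_pos.le]
  · show |wvec 1| ≤ φ
    show |(1:ℝ)| ≤ φ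
    rw [abs_one]
    exact one_lt_goldenRatio.le

/-- The key hitting lemma: if the expansion `lam ^ n` beats the required segment length,
then `g * Amat ^ n` moves `U` across `V`. -/
lemma hits_of {U V : Set Torus2} {u w0 : Fin 2 → ℝ} {ε δ : ℝ} (hε : 0 < ε) (hδ : 0 < δ)
    (hU : Metric.ball u ε ⊆ torusMk ⁻¹' U) (hV : Metric.ball w0 δ ⊆ torusMk ⁻¹' V)
    (g : SL2Z) (n : ℕ) (h : φ * Sfun (kf g δ) < ε * lam ^ n) :
    slHits (g * Amat ^ n) U V := by
  have hmass : (0:ℝ) < (mass g : ℝ) := by exact_mod_cast one_le_mass g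
  have hδg : 0 < δ / (mass g : ℝ) := by positivity
  have hwork : Works (Sfun (kf g δ)) (δ / (mass g : ℝ)) := by
    refine works_mono (Sfun_works (kf g δ)) ?_
    have h1 : (mass g : ℝ) / δ ≤ (kf g δ : ℝ) + 1 := by
      have h := Nat.le_ceil ((mass g : ℝ) / δ)
      unfold kf
      linarith
    have h2 : (0:ℝ) < (mass g : ℝ) / δ := by positivity
    calc 1 / ((kf g δ : ℝ) + 1) ≤ 1 / ((mass g : ℝ) / δ) :=
          one_div_le_one_div_of_le h2 h1
      _ = δ / (mass g : ℝ) := one_div_div _ _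
  obtain ⟨s, k, hs, hk⟩ := hwork (sl2Vec (Amat ^ n) u) (sl2Vec g⁻¹ w0)
  have hlampow : (0:ℝ) < lam ^ n := pow_pos lam_pos n
  set t : ℝ := s / lam ^ n with htdef
  set p : Fin 2 → ℝ := u + t • wvec with hpdef
  have hpu : dist p u < ε := by
    rw [dist_eq_norm]
    have : p - u = t • wvec := by rw [hpdef]; abel
    rw [this, norm_smul, Real.norm_eq_abs]
    have habs : |t| ≤ Sfun (kf g δ) / lam ^ n := by
      rw [htdef, abs_div, abs_of_pos hlampow]
      exact div_le_div_of_nonneg_right hs hlampow.le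
    have hS : 0 ≤ Sfun (kf g δ) := Sfun_nonneg _
    calc |t| * ‖wvec‖ ≤ |t| * φ := mul_le_mul_of_nonneg_left norm_wvec_le (abs_nonneg t)
      _ ≤ (Sfun (kf g δ) / lam ^ n) * φ :=
          mul_le_mul_of_nonneg_right habs goldenRatio_pos.le
      _ < ε := by
          rw [div_mul_eq_mul_div, div_lt_iff₀ hlampow]
          calc Sfun (kf g δ) * φ = φ * Sfun (kf g δ) := by ring
            _ < ε * lam ^ n := h
  have hx : sl2Vec (Amat ^ n) p = sl2Vec (Amat ^ n) u + s • wvec := by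
    rw [hpdef, sl2Vec_add, sl2Vec_smul, sl2Vec_Amat_pow_wvec, smul_smul, htdef,
      div_mul_cancel₀ _ (ne_of_gt hlampow)]
  set q : Fin 2 → ℝ := sl2Vec (Amat ^ n) u with hqdef
  set targ : Fin 2 → ℝ := sl2Vec g⁻¹ w0 with htargdef
  set y : Fin 2 → ℝ := (q + s • wvec) - (targ + fun i => (k i : ℝ)) with hydef
  have hy : ‖y‖ < δ / (mass g : ℝ) := by
    rw [pi_norm_lt_iff hδg]
    intro i
    have := hk i
    show |y i| < _
    have hyi : y i = q i + s * wvec i - (targ i + (k i : ℝ)) := by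
      rw [hydef]; simp [Pi.add_apply, Pi.sub_apply]
    rw [hyi]
    exact this
  have hdecomp : q + s • wvec = y + targ + fun i => (k i : ℝ) := by
    rw [hydef]; abel
  set k' : Fin 2 → ℤ := (g : Matrix (Fin 2) (Fin 2) ℤ).mulVec k with hk'def
  have himg : sl2Vec g (q + s • wvec) = sl2Vec g y + w0 + fun i => (k' i : ℝ) := by
    rw [hdecomp, sl2Vec_add, sl2Vec_add, htargdef, sl2Vec_inv_cancel, sl2Vec_intCast]
  have hgy : ‖sl2Vec g y‖ < δ := by
    calc ‖sl2Vec g y‖ ≤ (mass g : ℝ) * ‖y‖ := sl2Vec_norm_le g y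
      _ < (mass g : ℝ) * (δ / (mass g : ℝ)) := by
          exact mul_lt_mul_of_pos_left hy hmass
      _ = δ := by field_simp
  refine ⟨p, hU ?_, ?_⟩
  · exact Metric.mem_ball.2 hpu
  · have e1 : sl2Vec (g * Amat ^ n) p = sl2Vec g (q + s • wvec) := by
      rw [sl2Vec_mul, hx, hqdef]
    have e2 : torusMk (sl2Vec (g * Amat ^ n) p)
        = torusMk (sl2Vec g (q + s • wvec) - fun i => (k' i : ℝ)) := by
      rw [e1, torusMk_sub_int]
    rw [e2]
    apply hV
    rw [Metric.mem_ball, dist_eq_norm]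
    have e3 : (sl2Vec g (q + s • wvec) - fun i => (k' i : ℝ)) - w0 = sl2Vec g y := by
      rw [himg]; abel
    rw [e3]
    exact hgy

end ThickAux

/-- The action of `SL(2, ℤ)` on the torus `𝕋² = ℝ²/ℤ²` is thick strong mixing: there is a
thick set `N ⊆ SL(2, ℤ)` such that for every pair of nonempty open `U, V ⊆ 𝕋²` there is a
finite `F ⊆ N` with `γU ∩ V ≠ ∅` for all `γ ∈ N \ F`. -/
theorem sl2_torus_thickStrongMixing :
    ∃ N : Set (Matrix.SpecialLinearGroup (Fin 2) ℤ), IsThick N ∧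
      ∀ U V : Set Torus2, IsOpen U → U.Nonempty → IsOpen V → V.Nonempty →
        ∃ F : Finset (Matrix.SpecialLinearGroup (Fin 2) ℤ), ↑F ⊆ N ∧
          ∀ γ ∈ N \ (↑F : Set (Matrix.SpecialLinearGroup (Fin 2) ℤ)), slHits γ U V := by
  classical
  refine ⟨{γ : SL2Z | ∃ g n, nfun g ≤ n ∧ γ = g * Amat ^ n}, ?_, ?_⟩
  · -- thickness
    intro F
    set m : ℕ := max (F.sup fun γ => nfun γ⁻¹) (nfun 1) with hm
    refine ⟨Amat ^ m, ⟨1, m, le_max_right _ _, (one_mul _).symm⟩, ?_⟩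
    refine Set.mem_iInter₂.2 fun γ hγ => ?_
    rw [Set.mem_smul_set_iff_inv_smul_mem, smul_eq_mul]
    exact ⟨γ⁻¹, m, le_trans (Finset.le_sup (f := fun γ => nfun γ⁻¹) hγ) (le_max_left _ _), rfl⟩
  · -- mixing
    intro U V hUo hUne hVo hVne
    obtain ⟨u1, hu1⟩ := hUne
    obtain ⟨u0, rfl⟩ := torusMk_surjective u1
    obtain ⟨v1, hv1⟩ := hVne
    obtain ⟨w0, rfl⟩ := torusMk_surjective v1
    obtain ⟨ε, hε, hballU⟩ :=
      Metric.isOpen_iff.1 (hUo.preimage continuous_torusMk) u0 hu1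
    obtain ⟨δ, hδ, hballV⟩ :=
      Metric.isOpen_iff.1 (hVo.preimage continuous_torusMk) w0 hv1
    set N : Set SL2Z := {γ : SL2Z | ∃ g n, nfun g ≤ n ∧ γ = g * Amat ^ n} with hN
    have hgood : ∀ g n, φ * Sfun (kf g δ) < ε * lam ^ n → slHits (g * Amat ^ n) U V :=
      fun g n h => hits_of hε hδ hballU hballV g n h
    set B : ℕ := ⌈φ / ε⌉₊ + ⌈1 / δ⌉₊ + 1 with hB
    set KB : ℕ := ⌈(B : ℝ) / δ⌉₊ with hKB
    obtain ⟨NB, hNB⟩ := pow_unbounded_of_one_lt (R := ℝ) (φ * maxS KB / ε) one_lt_lam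
    have hNB' : φ * maxS KB < ε * lam ^ NB := by
      rw [div_lt_iff₀ hε] at hNB
      calc φ * maxS KB < lam ^ NB * ε := hNB
        _ = ε * lam ^ NB := by ring
    set Bad : Set SL2Z := {γ : SL2Z | γ ∈ N ∧ ¬ slHits γ U V} with hBad
    have hBadsub : Bad ⊆ (fun p : SL2Z × ℕ => p.1 * Amat ^ p.2) ''
        ({g : SL2Z | mass g ≤ B} ×ˢ Set.Iio NB) := by
      rintro γ ⟨⟨g, n, hn, rfl⟩, hbad⟩
      have hmass1 : (1:ℝ) ≤ (mass g : ℝ) := by exact_mod_cast one_le_mass g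
      have hmB : mass g ≤ B := by
        by_contra hc
        push_neg at hc
        have hBm : (B : ℝ) ≤ (mass g : ℝ) := by exact_mod_cast hc.le
        apply hbad
        apply hgood g n
        -- φ * Sfun (kf g δ) < ε * lam ^ n
        have hkf : kf g δ ≤ (mass g) ^ 2 := by
          have step1 : kf g δ ≤ mass g * ⌈1 / δ⌉₊ := by
            rw [kf, Nat.ceil_le]
            push_cast
            have h1δ : 1 / δ ≤ (⌈1 / δ⌉₊ : ℝ) := Nat.le_ceil _
            calc (mass g : ℝ) / δ = (mass g : ℝ) * (1 / δ) := by ring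
              _ ≤ (mass g : ℝ) * (⌈1 / δ⌉₊ : ℝ) := by
                  exact mul_le_mul_of_nonneg_left h1δ (by positivity)
          have step2 : ⌈1 / δ⌉₊ ≤ B := by omega
          have step3 : B ≤ mass g := hc.le
          calc kf g δ ≤ mass g * ⌈1 / δ⌉₊ := step1
            _ ≤ mass g * mass g := Nat.mul_le_mul_left _ (step2.trans step3)
            _ = (mass g) ^ 2 := (sq (mass g)).symm
        have h1 : Sfun (kf g δ) ≤ maxS ((mass g) ^ 2) := Sfun_le_maxS hkf
        have h2 : φ ≤ ε * (mass g : ℝ) := by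
          have : φ / ε ≤ (⌈φ / ε⌉₊ : ℝ) := Nat.le_ceil _
          have hBge : (⌈φ / ε⌉₊ : ℝ) ≤ (B : ℝ) := by
            rw [hB]; push_cast; linarith [show (0:ℝ) ≤ ((⌈1 / δ⌉₊ : ℕ) : ℝ) from Nat.cast_nonneg _]
          have : φ / ε ≤ (mass g : ℝ) := by linarith
          rw [div_le_iff₀ hε] at this
          calc φ ≤ (mass g : ℝ) * ε := this
            _ = ε * (mass g : ℝ) := by ring
        have hmS : 0 ≤ maxS ((mass g) ^ 2) := maxS_nonneg _
        have hlamle : lam ^ nfun g ≤ lam ^ n := pow_le_pow_right₀ one_lt_lam.le hn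
        calc φ * Sfun (kf g δ) ≤ φ * maxS ((mass g) ^ 2) :=
              mul_le_mul_of_nonneg_left h1 goldenRatio_pos.le
          _ ≤ (ε * (mass g : ℝ)) * maxS ((mass g) ^ 2) :=
              mul_le_mul_of_nonneg_right h2 hmS
          _ ≤ ε * ((mass g : ℝ) ^ 2 * maxS ((mass g) ^ 2)) := by
              have hsq : (mass g : ℝ) ≤ (mass g : ℝ) ^ 2 := by nlinarith
              calc (ε * (mass g : ℝ)) * maxS ((mass g) ^ 2)
                  = ε * ((mass g : ℝ) * maxS ((mass g) ^ 2)) := by ring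
                _ ≤ ε * ((mass g : ℝ) ^ 2 * maxS ((mass g) ^ 2)) :=
                    mul_le_mul_of_nonneg_left
                      (mul_le_mul_of_nonneg_right hsq hmS) hε.le
          _ < ε * lam ^ nfun g := by
              have := nfun_spec g
              exact mul_lt_mul_of_pos_left this hε
          _ ≤ ε * lam ^ n := mul_le_mul_of_nonneg_left hlamle hε.le
      have hnNB : n < NB := by
        by_contra hc
        push_neg at hc
        apply hbad
        apply hgood g n
        have hkf2 : kf g δ ≤ KB := by
          rw [kf, hKB]
          apply Nat.ceil_le_ceil
          have hmBr : (mass g : ℝ) ≤ (B : ℝ) := by exact_mod_cast hmB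
          gcongr
        have h1 : Sfun (kf g δ) ≤ maxS KB := Sfun_le_maxS hkf2
        calc φ * Sfun (kf g δ) ≤ φ * maxS KB :=
              mul_le_mul_of_nonneg_left h1 goldenRatio_pos.le
          _ < ε * lam ^ NB := hNB'
          _ ≤ ε * lam ^ n :=
              mul_le_mul_of_nonneg_left (pow_le_pow_right₀ one_lt_lam.le hc) hε.le
      exact ⟨(g, n), ⟨hmB, hnNB⟩, rfl⟩
    have hBadfin : Bad.Finite :=
      Set.Finite.subset (((mass_le_finite B).prod (Set.finite_Iio NB)).image _) hBadsub
    refine ⟨hBadfin.toFinset, ?_, ?_⟩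
    · intro γ hγ
      rw [Finset.mem_coe, Set.Finite.mem_toFinset] at hγ
      exact hγ.1
    · rintro γ ⟨hγN, hγF⟩
      by_contra hbad
      exact hγF (by rw [Finset.mem_coe, Set.Finite.mem_toFinset]; exact ⟨hγN, hbad⟩)
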